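/- Let φ: Div^0(P^1(Q)) → V_g(O) be a Γ-invariant modular symbol (φ(γD)|γ = φ(D) for γ ∈ Γ ⊆ SL_2(Z)). Define the level-n Mazur–Tate element θ_n(φ) = Σ_{a ∈ (Z/p^nZ)^×} φ({∞} - {a/p^n})(0,1) · σ_a ∈ O[(Z/p^nZ)^×]. Then θ_n(φ | [[p,0],[0,1]]) = p^g · ν_{n/n-1}(θ_{n-1}(φ)), where ν_{n/n-1} is the corestriction map O[(Z/p^{n-1}Z)^×] → O[(Z/p^nZ)^×] sending σ_a to Σ_{b ≡ a mod p^{n-1}} σ_b. -/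

import Mathlib

open MvPolynomial

/-- The right action of an integral 2×2 matrix `γ = [[a,b],[c,d]]` on polynomials in
`X = X 0`, `Y = X 1`: `(P|γ)(X,Y) = P(dX - cY, -bX + aY)`. -/
noncomputable def matAct {R : Type*} [CommRing R] (γ : Matrix (Fin 2) (Fin 2) ℤ)
    (P : MvPolynomial (Fin 2) R) : MvPolynomial (Fin 2) R :=
  MvPolynomial.aeval
    ![γ 1 1 • MvPolynomial.X 0 - γ 1 0 • MvPolynomial.X 1,
      -(γ 0 1 • MvPolynomial.X 0) + γ 0 0 • MvPolynomial.X 1] P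

/-- The action of an integral 2×2 matrix on `P^1(ℚ)` (modelled as `Option ℚ`,
with `none = ∞`) by fractional linear transformations. -/
noncomputable def moeb (γ : Matrix (Fin 2) (Fin 2) ℤ) : Option ℚ → Option ℚ
  | none => if γ 1 0 = 0 then none else some ((γ 0 0 : ℚ) / (γ 1 0 : ℚ))
  | some q => if (γ 1 0 : ℚ) * q + (γ 1 1 : ℚ) = 0 then none
      else some (((γ 0 0 : ℚ) * q + (γ 0 1 : ℚ)) / ((γ 1 0 : ℚ) * q + (γ 1 1 : ℚ)))

/-- The degree of a divisor on `P^1(ℚ)`. -/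
noncomputable def degDiv (D : Option ℚ →₀ ℤ) : ℤ := D.sum fun _ n => n

/-- The level-`m` Mazur–Tate element of a `V_g(O)`-valued modular symbol `φ`:
`θ_m(φ) = Σ_{a ∈ (ℤ/m)^×} φ({∞} - {a/m})(0,1) · σ_a ∈ O[(ℤ/m)^×]`. -/
noncomputable def MT (O : Type*) [CommRing O]
    (φ : (Option ℚ →₀ ℤ) → MvPolynomial (Fin 2) O) (m : ℕ) [NeZero m] :
    MonoidAlgebra O (ZMod m)ˣ :=
  ∑ u : (ZMod m)ˣ, MonoidAlgebra.single u
    (MvPolynomial.eval ![0, 1]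
      (φ (Finsupp.single none 1 -
        Finsupp.single (some ((((u : ZMod m).val : ℚ)) / (m : ℚ))) 1)))

/-- The corestriction map `ν : O[(ℤ/a)^×] → O[(ℤ/b)^×]` (for `a ∣ b`), sending
`σ_a` to the sum of the `σ_b` with `b ≡ a mod a`. -/
noncomputable def coresU (O : Type*) [CommRing O] (a b : ℕ) [NeZero a] [NeZero b] (h : a ∣ b)
    (θ : MonoidAlgebra O (ZMod a)ˣ) : MonoidAlgebra O (ZMod b)ˣ :=
  MonoidAlgebra.ofCoeff (Finsupp.equivFunOnFinite.symm
    (fun τ => θ.coeff (Units.map (ZMod.castHom h (ZMod a)).toMonoidHom τ)))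


lemma eval_matAct_aux {O : Type*} [CommRing O] (γ : Matrix (Fin 2) (Fin 2) ℤ)
    (P : MvPolynomial (Fin 2) O) (x : Fin 2 → O) :
    MvPolynomial.eval x (matAct γ P)
      = MvPolynomial.eval ![γ 1 1 • x 0 - γ 1 0 • x 1,
          -(γ 0 1 • x 0) + γ 0 0 • x 1] P := by
  rw [matAct, aeval_def, eval_eval₂]
  have h1 : (eval x).comp (algebraMap O (MvPolynomial (Fin 2) O)) = RingHom.id O := by
    ext r; simp [algebraMap_eq]
  rw [h1, eval₂_id]
  have h2 : (fun s => (eval x) (![γ 1 1 • X 0 - γ 1 0 • X 1,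
      -(γ 0 1 • X 0) + γ 0 0 • X 1] s))
      = ![γ 1 1 • x 0 - γ 1 0 • x 1, -(γ 0 1 • x 0) + γ 0 0 • x 1] := by
    funext i
    fin_cases i <;> simp
  rw [h2]

lemma homog_eval_smul {O : Type*} [CommRing O] {P : MvPolynomial (Fin 2) O} {g : ℕ}
    (h : P.IsHomogeneous g) (c : O) (x : Fin 2 → O) :
    MvPolynomial.eval (c • x) P = c ^ g * MvPolynomial.eval x P := by
  rw [eval_eq, eval_eq, Finset.mul_sum]
  apply Finset.sum_congr rfl
  intro d hd
  rw [mem_support_iff] at hd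
  have hw := h hd
  rw [Finsupp.weight_apply] at hw
  simp only [Pi.smul_apply, smul_eq_mul, mul_pow]
  rw [Finset.prod_mul_distrib, Finset.prod_pow_eq_pow_sum]
  have hg : ∑ i ∈ d.support, d i = g := by
    simpa [Finsupp.sum, Pi.one_apply] using hw
  rw [hg]; ring

/-- Let `φ : Div^0(P^1(ℚ)) → V_g(O)` be a `Γ_0(N)`-invariant modular symbol
(`φ(γD)|γ = φ(D)`).  Then `θ_n(φ | [[p,0],[0,1]]) = p^g · ν_{n/n-1}(θ_{n-1}(φ))`,
where `ν_{n/n-1}` is the corestriction map `O[(ℤ/p^{n-1})^×] → O[(ℤ/p^n)^×]`. -/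
theorem MT_slash_p (p N n g : ℕ) (hp : p.Prime) [NeZero p] (hpN : ¬ p ∣ N) (hn : 1 ≤ n)
    (O : Type*) [CommRing O]
    (φ : (Option ℚ →₀ ℤ) → MvPolynomial (Fin 2) O)
    (hhom : ∀ D, (φ D).IsHomogeneous g)
    (hadd : ∀ D D', degDiv D = 0 → degDiv D' = 0 → φ (D + D') = φ D + φ D')
    (hinv : ∀ γ : Matrix (Fin 2) (Fin 2) ℤ, γ.det = 1 → (N : ℤ) ∣ γ 1 0 →
      ∀ D, degDiv D = 0 → matAct γ (φ (Finsupp.mapDomain (moeb γ) D)) = φ D) :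
    MT O (fun D => matAct !![(p : ℤ), 0; 0, 1]
        (φ (Finsupp.mapDomain (moeb !![(p : ℤ), 0; 0, 1]) D))) (p ^ n)
      = (p : O) ^ g • coresU O (p ^ (n - 1)) (p ^ n) (pow_dvd_pow p (Nat.sub_le n 1))
          (MT O φ (p ^ (n - 1))) := by
  classical
  have hp0 : (p : ℚ) ≠ 0 := Nat.cast_ne_zero.mpr hp.ne_zero
  set P : ℕ := p ^ (n - 1) with hPdef
  have hPpos : 0 < P := pow_pos hp.pos _
  have hP0 : ((P : ℕ) : ℚ) ≠ 0 := Nat.cast_ne_zero.mpr hPpos.ne'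
  have hpn : p ^ n = P * p := by
    rw [hPdef, ← pow_succ, Nat.sub_add_cancel hn]
  have hpnQ : ((p ^ n : ℕ) : ℚ) = (P : ℚ) * (p : ℚ) := by
    rw [hpn]; push_cast; ring
  have hdeg : ∀ q : ℚ, degDiv (Finsupp.single none 1 - Finsupp.single (some q) 1) = 0 := by
    intro q
    rw [degDiv, Finsupp.sum_sub_index (by intros; rfl)]
    rw [Finsupp.sum_single_index rfl, Finsupp.sum_single_index rfl]
    ring
  apply MonoidAlgebra.coeff_injective
  ext τ
  -- reduce both sides to coefficients
  set a : ℕ := ((τ : ZMod (p ^ n)).val) with ha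
  set τ' : (ZMod P)ˣ :=
    Units.map (ZMod.castHom (pow_dvd_pow p (Nat.sub_le n 1)) (ZMod P)).toMonoidHom τ with hτ'
  have hval : ((τ' : ZMod P)).val = a % P := by
    rw [hτ']
    have : ((Units.map (ZMod.castHom (pow_dvd_pow p (Nat.sub_le n 1))
        (ZMod P)).toMonoidHom τ : (ZMod P)ˣ) : ZMod P)
        = ZMod.castHom (pow_dvd_pow p (Nat.sub_le n 1)) (ZMod P) (τ : ZMod (p ^ n)) := rfl
    rw [this, ZMod.castHom_apply, ← ZMod.natCast_val, ZMod.val_natCast]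
  have hLHS : (MT O (fun D => matAct !![(p : ℤ), 0; 0, 1]
      (φ (Finsupp.mapDomain (moeb !![(p : ℤ), 0; 0, 1]) D))) (p ^ n)).coeff τ
      = MvPolynomial.eval ![0, 1] (matAct !![(p : ℤ), 0; 0, 1]
        (φ (Finsupp.mapDomain (moeb !![(p : ℤ), 0; 0, 1])
          (Finsupp.single none 1 -
            Finsupp.single (some ((a : ℚ) / ((p ^ n : ℕ) : ℚ))) 1)))) := by
    rw [MT, MonoidAlgebra.coeff_sum, Finsupp.finset_sum_apply]
    rw [Finset.sum_eq_single τ]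
    · simp [MonoidAlgebra.coeff_single, Finsupp.single_apply, ha]
    · intro b _ hb
      simp [MonoidAlgebra.coeff_single, Finsupp.single_apply, hb]
    · intro h; exact absurd (Finset.mem_univ τ) h
  have hRHS : ((p : O) ^ g • coresU O (p ^ (n - 1)) (p ^ n)
        (pow_dvd_pow p (Nat.sub_le n 1)) (MT O φ (p ^ (n - 1)))).coeff τ
      = (p : O) ^ g * MvPolynomial.eval ![0, 1]
        (φ (Finsupp.single none 1 -
          Finsupp.single (some (((a % P : ℕ) : ℚ) / ((P : ℕ) : ℚ))) 1)) := by
    rw [MonoidAlgebra.coeff_smul_apply, smul_eq_mul, coresU, MonoidAlgebra.coeff_ofCoeff]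
    rw [Finsupp.coe_equivFunOnFinite_symm]
    congr 1
    rw [MT, MonoidAlgebra.coeff_sum, Finsupp.finset_sum_apply]
    rw [Finset.sum_eq_single τ']
    · rw [MonoidAlgebra.coeff_single, Finsupp.single_apply, if_pos hτ', hval]
    · intro b _ hb
      rw [MonoidAlgebra.coeff_single, Finsupp.single_apply, if_neg]
      intro hcon
      exact hb (hcon.trans hτ'.symm)
    · intro h; exact absurd (Finset.mem_univ τ') h
  rw [hLHS, hRHS]
  -- Step 1 : compute the pushforward divisor under [[p,0],[0,1]]
  have hmoeb1 : moeb !![(p : ℤ), 0; 0, 1] none = none := by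
    simp [moeb]
  have hmoebp : ∀ q : ℚ, moeb !![(p : ℤ), 0; 0, 1] (some q) = some ((p : ℚ) * q) := by
    intro q; simp [moeb]
  have hmoeb2 : moeb !![(p : ℤ), 0; 0, 1] (some ((a : ℚ) / ((p ^ n : ℕ) : ℚ)))
      = some ((a : ℚ) / ((P : ℕ) : ℚ)) := by
    rw [hmoebp]
    congr 1
    rw [hpnQ]
    field_simp
  have hmap1 : Finsupp.mapDomain (moeb !![(p : ℤ), 0; 0, 1])
      (Finsupp.single none 1 -
        Finsupp.single (some ((a : ℚ) / ((p ^ n : ℕ) : ℚ))) (1 : ℤ))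
      = Finsupp.single none 1 -
        Finsupp.single (some ((a : ℚ) / ((P : ℕ) : ℚ))) 1 := by
    have := map_sub (Finsupp.mapDomain.addMonoidHom (M := ℤ) (moeb !![(p : ℤ), 0; 0, 1]))
      (Finsupp.single none 1)
      (Finsupp.single (some ((a : ℚ) / ((p ^ n : ℕ) : ℚ))) 1)
    simp only [Finsupp.mapDomain.addMonoidHom_apply] at this
    rw [this, Finsupp.mapDomain_single, Finsupp.mapDomain_single, hmoeb1, hmoeb2]
  rw [hmap1]
  -- Step 2 : translation invariance
  set k : ℕ := a / P with hk
  have hsplit : ((a % P : ℕ) : ℚ) / ((P : ℕ) : ℚ) + (k : ℚ) = (a : ℚ) / ((P : ℕ) : ℚ) := by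
    have h0 : (a % P : ℕ) + P * k = a := Nat.mod_add_div a P
    have h1 : ((a % P : ℕ) : ℚ) + (P : ℚ) * (k : ℚ) = (a : ℚ) := by exact_mod_cast h0
    field_simp
    linarith
  have hmoebk1 : moeb !![(1 : ℤ), (k : ℤ); 0, 1] none = none := by simp [moeb]
  have hmoebk : ∀ q : ℚ, moeb !![(1 : ℤ), (k : ℤ); 0, 1] (some q) = some (q + (k : ℚ)) := by
    intro q; simp [moeb]
  have hmoebk2 : moeb !![(1 : ℤ), (k : ℤ); 0, 1]
      (some (((a % P : ℕ) : ℚ) / ((P : ℕ) : ℚ)))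
      = some ((a : ℚ) / ((P : ℕ) : ℚ)) := by
    rw [hmoebk]
    congr 1
  have hmapk : Finsupp.mapDomain (moeb !![(1 : ℤ), (k : ℤ); 0, 1])
      (Finsupp.single none 1 -
        Finsupp.single (some (((a % P : ℕ) : ℚ) / ((P : ℕ) : ℚ))) (1 : ℤ))
      = Finsupp.single none 1 -
        Finsupp.single (some ((a : ℚ) / ((P : ℕ) : ℚ))) 1 := by
    have := map_sub (Finsupp.mapDomain.addMonoidHom (M := ℤ) (moeb !![(1 : ℤ), (k : ℤ); 0, 1]))
      (Finsupp.single none 1)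
      (Finsupp.single (some (((a % P : ℕ) : ℚ) / ((P : ℕ) : ℚ))) 1)
    simp only [Finsupp.mapDomain.addMonoidHom_apply] at this
    rw [this, Finsupp.mapDomain_single, Finsupp.mapDomain_single, hmoebk1, hmoebk2]
  have hinvk := hinv !![(1 : ℤ), (k : ℤ); 0, 1]
    (by simp [Matrix.det_fin_two_of]) (by simp) _ (hdeg (((a % P : ℕ) : ℚ) / ((P : ℕ) : ℚ)))
  rw [hmapk] at hinvk
  have htrans : MvPolynomial.eval ![0, 1]
      (φ (Finsupp.single none 1 -
        Finsupp.single (some ((a : ℚ) / ((P : ℕ) : ℚ))) 1))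
      = MvPolynomial.eval ![0, 1]
        (φ (Finsupp.single none 1 -
          Finsupp.single (some (((a % P : ℕ) : ℚ) / ((P : ℕ) : ℚ))) 1)) := by
    conv_rhs => rw [← hinvk]
    rw [eval_matAct_aux]
    have hv : ![(!![(1 : ℤ), (k : ℤ); 0, 1] 1 1) • (![0, 1] : Fin 2 → O) 0
          - (!![(1 : ℤ), (k : ℤ); 0, 1] 1 0) • (![0, 1] : Fin 2 → O) 1,
        -((!![(1 : ℤ), (k : ℤ); 0, 1] 0 1) • (![0, 1] : Fin 2 → O) 0)
          + (!![(1 : ℤ), (k : ℤ); 0, 1] 0 0) • (![0, 1] : Fin 2 → O) 1]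
        = (![0, 1] : Fin 2 → O) := by
      funext i
      fin_cases i <;> simp
    rw [hv]
  -- Step 3 : homogeneity
  rw [eval_matAct_aux]
  have hvec : ![(!![(p : ℤ), 0; 0, 1] 1 1) • (![0, 1] : Fin 2 → O) 0
        - (!![(p : ℤ), 0; 0, 1] 1 0) • (![0, 1] : Fin 2 → O) 1,
      -((!![(p : ℤ), 0; 0, 1] 0 1) • (![0, 1] : Fin 2 → O) 0)
        + (!![(p : ℤ), 0; 0, 1] 0 0) • (![0, 1] : Fin 2 → O) 1]
      = (p : O) • (![0, 1] : Fin 2 → O) := by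
    funext i
    fin_cases i <;> simp
  rw [hvec, homog_eval_smul (hhom _), htrans]
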